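/- For every positive integer n, (2n+1) · Σ_{2k+x+y=n-1} multinom(n; k, k+1, x, y) = n · C(2n+1, n), where the sum is over nonnegative integers k,x,y with 2k+x+y = n−1 and multinom(n; k,k+1,x,y) = n!/(k!(k+1)!x!y!). -/

import Mathlib

open scoped Classical
open Polynomial Finset

private lemma aux_piAntidiag (n : ℕ) (hn : 1 ≤ n) :
    (∑ g ∈ Finset.piAntidiag (Finset.univ : Finset (Fin 4)) n,
      if 2 * g 0 + g 2 + g 3 = n - 1 then Nat.multinomial Finset.univ g else 0)
    = (∑ k ∈ Finset.range n, ∑ x ∈ Finset.range n, ∑ y ∈ Finset.range n,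
        if 2 * k + x + y = n - 1 then Nat.multinomial Finset.univ ![k, k + 1, x, y] else 0) := by
  rw [← Finset.sum_product', ← Finset.sum_product']
  rw [← Finset.sum_filter, ← Finset.sum_filter]
  refine Finset.sum_bij' (fun g _ => ((g 0, g 2), g 3))
    (fun t _ => ![t.1.1, t.1.1 + 1, t.1.2, t.2]) ?_ ?_ ?_ ?_ ?_
  · rintro g hg
    simp only [Finset.mem_filter, Finset.mem_piAntidiag, Fin.sum_univ_four, Finset.mem_product,
      Finset.mem_range] at hg ⊢
    omega
  · rintro ⟨⟨k, x⟩, y⟩ ht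
    simp only [Finset.mem_filter, Finset.mem_product, Finset.mem_range] at ht
    simp only [Finset.mem_filter, Finset.mem_piAntidiag, Fin.sum_univ_four]
    simp only [Matrix.cons_val_zero, Matrix.cons_val_one, Matrix.head_cons, Matrix.cons_val_two,
      Matrix.tail_cons, Matrix.cons_val_three, Matrix.head_fin_const, Finset.mem_univ,
      implies_true, and_true]
    omega
  · intro g hg
    simp only [Finset.mem_filter, Finset.mem_piAntidiag, Fin.sum_univ_four] at hg
    funext i
    fin_cases i <;> simp <;> omega
  · rintro ⟨⟨k, x⟩, y⟩ ht
    simp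
  · intro g hg
    congr 1
    simp only [Finset.mem_filter, Finset.mem_piAntidiag, Fin.sum_univ_four] at hg
    funext i
    fin_cases i <;> simp <;> omega

private lemma aux_coeff (n : ℕ) :
    (∑ g ∈ Finset.piAntidiag (Finset.univ : Finset (Fin 4)) n,
      if 2 * g 0 + g 2 + g 3 = n - 1 then Nat.multinomial Finset.univ g else 0)
    = (2 * n).choose (n - 1) := by
  have h : ((X : Polynomial ℕ) + 1) ^ (2 * n) =
      ∑ g ∈ Finset.piAntidiag (Finset.univ : Finset (Fin 4)) n,
        (Nat.multinomial Finset.univ g : Polynomial ℕ) * X ^ (2 * g 0 + g 2 + g 3) := by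
    have h0 := Finset.sum_pow_eq_sum_piAntidiag (Finset.univ : Finset (Fin 4))
      (![X ^ 2, 1, X, X] : Fin 4 → Polynomial ℕ) n
    rw [Fin.sum_univ_four] at h0
    simp only [Matrix.cons_val_zero, Matrix.cons_val_one, Matrix.head_cons, Matrix.cons_val_two,
      Matrix.tail_cons, Matrix.cons_val_three] at h0
    have e1 : ((X : Polynomial ℕ) ^ 2 + 1 + X + X) = (X + 1) ^ 2 := by ring
    rw [e1, ← pow_mul] at h0
    rw [h0]
    refine Finset.sum_congr rfl fun g hg => ?_
    rw [Fin.prod_univ_four]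
    simp only [Matrix.cons_val_zero, Matrix.cons_val_one, Matrix.head_cons, Matrix.cons_val_two,
      Matrix.tail_cons, Matrix.cons_val_three]
    rw [one_pow, mul_one, ← pow_mul, ← pow_add, ← pow_add]
  have h2 := congrArg (fun p => Polynomial.coeff p (n - 1)) h
  simp only [Polynomial.coeff_X_add_one_pow, Polynomial.finset_sum_coeff,
    ← Polynomial.C_eq_natCast, Polynomial.coeff_C_mul, Polynomial.coeff_X_pow,
    mul_ite, mul_one, mul_zero, Nat.cast_id] at h2
  rw [h2]
  refine Finset.sum_congr rfl fun g hg => ?_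
  simp [eq_comm]

theorem multinomial_sum_identity (n : ℕ) (hn : 1 ≤ n) :
    (2 * n + 1) *
      (∑ k ∈ Finset.range n, ∑ x ∈ Finset.range n, ∑ y ∈ Finset.range n,
        if 2 * k + x + y = n - 1 then Nat.multinomial Finset.univ ![k, k + 1, x, y] else 0)
    = n * (2 * n + 1).choose n := by
  rw [← aux_piAntidiag n hn, aux_coeff n]
  have h := Nat.add_one_mul_choose_eq (2 * n) (n - 1)
  have hs : n - 1 + 1 = n := Nat.succ_pred_eq_of_pos hn
  simp only [Nat.succ_eq_add_one, hs] at h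
  rw [h, mul_comm]
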